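/- Let n ≥ k ≥ 2 and let M ∈ ℂ^{n×k} satisfy M(1,j) = 0 for j = 2,…,k. Let J ∈ ℂ^{n×n} be the downshift matrix and set S = J^k − M·[0_{k×(n−k)} | I_k] (so the last k columns of J^k are modified by subtracting the columns of M). Define S_1 = J − (M e_1) e_n^T and S̃ = J^{k−1} − M̃·[0_{(k−1)×(n−k+1)} | I_{k−1}], where M̃ ∈ ℂ^{n×(k−1)} is given by M̃(i,j) = M(i+1, j+1) for 1 ≤ i ≤ n−1 and M̃(n,j) = 0. Then S = S_1 S̃. -/

import Mathlib

open Matrix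

noncomputable section

/-- The `n × n` downshift matrix `J`: ones on the subdiagonal, zeros elsewhere. -/
def downshift (n : ℕ) : Matrix (Fin n) (Fin n) ℂ :=
  fun p q => if (p : ℕ) = (q : ℕ) + 1 then 1 else 0

/-- The `k × n` matrix `[0_{k×(n−k)} | I_k]`: last `k` columns form the identity,
first `n − k` columns are zero. -/
def lastColsSel (n k : ℕ) : Matrix (Fin k) (Fin n) ℂ :=
  fun i q => if (q : ℕ) = n - k + (i : ℕ) then 1 else 0

private lemma fin_sum_ite {n : ℕ} (t : ℕ) (g : Fin n → ℂ) :
    (∑ r : Fin n, if (r : ℕ) = t then g r else 0)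
      = if h : t < n then g ⟨t, h⟩ else 0 := by
  split
  · next h =>
    rw [Finset.sum_eq_single (⟨t, h⟩ : Fin n)]
    · simp
    · intro r _ hr
      rw [if_neg]
      simpa [Fin.ext_iff] using hr
    · simp
  · next h =>
    apply Finset.sum_eq_zero
    intro r _
    rw [if_neg]
    exact fun hc => h (hc ▸ r.isLt)

private lemma fin_sum_ite' {n : ℕ} (t c : ℕ) (g : Fin n → ℂ) :
    (∑ r : Fin n, if t = c + (r : ℕ) then g r else 0)
      = if h : c ≤ t ∧ t - c < n then g ⟨t - c, h.2⟩ else 0 := by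
  split
  · next h =>
    rw [Finset.sum_eq_single (⟨t - c, h.2⟩ : Fin n)]
    · rw [if_pos (show t = c + ((⟨t - c, h.2⟩ : Fin n) : ℕ) from by
        show t = c + (t - c); omega)]
    · intro r _ hr
      rw [if_neg]
      intro hc
      exact hr (Fin.ext (show (r : ℕ) = t - c by omega))
    · simp
  · next h =>
    apply Finset.sum_eq_zero
    intro r _
    rw [if_neg]
    intro hc
    have := r.isLt
    exact h ⟨by omega, by omega⟩

private lemma fin_sum_ite'' {n : ℕ} (t c : ℕ) (g : Fin n → ℂ) :
    (∑ r : Fin n, if t = (r : ℕ) + c then g r else 0)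
      = if h : c ≤ t ∧ t - c < n then g ⟨t - c, h.2⟩ else 0 := by
  have : ∀ r : Fin n, (if t = (r : ℕ) + c then g r else 0)
      = (if t = c + (r : ℕ) then g r else 0) := by
    intro r
    rw [if_congr (by omega : (t = (r : ℕ) + c) ↔ (t = c + (r : ℕ))) rfl rfl]
  rw [Finset.sum_congr rfl (fun r _ => this r), fin_sum_ite']

private lemma downshift_pow (n m : ℕ) (p q : Fin n) :
    ((downshift n) ^ m) p q = if (p : ℕ) = (q : ℕ) + m then 1 else 0 := by
  induction m generalizing q with
  | zero => simp [one_apply, Fin.ext_iff]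
  | succ m ih =>
    rw [pow_succ, mul_apply]
    have : ∀ r : Fin n, ((downshift n) ^ m) p r * downshift n r q
        = if (r : ℕ) = (q : ℕ) + 1 then ((downshift n) ^ m) p r else 0 := by
      intro r
      simp only [downshift]
      split <;> ring
    rw [Finset.sum_congr rfl (fun r _ => this r), fin_sum_ite]
    split
    · next h =>
      rw [ih]
      congr 1
      · simp only [eq_iff_iff]; omega
    · next h =>
      rw [if_neg]
      have := p.isLt
      omega

theorem frobenius_factorization_step (n k : ℕ) (hk : 2 ≤ k) (hkn : k ≤ n)
    (M : Matrix (Fin n) (Fin k) ℂ)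
    (hM : ∀ j : Fin k, 0 < (j : ℕ) → M ⟨0, by omega⟩ j = 0) :
    (downshift n) ^ k - M * lastColsSel n k =
      (downshift n -
          vecMulVec (fun i => M i ⟨0, by omega⟩) (Pi.single (⟨n - 1, by omega⟩ : Fin n) 1)) *
      ((downshift n) ^ (k - 1) -
        (Matrix.of (fun (i : Fin n) (j : Fin (k - 1)) =>
            if h : (i : ℕ) + 1 < n then
              M ⟨(i : ℕ) + 1, h⟩ ⟨(j : ℕ) + 1, by have := j.isLt; omega⟩
            else 0)) *
        lastColsSel n (k - 1)) := by
  have hn : 1 ≤ n := by omega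
  -- abbreviations
  set v : Fin n → ℂ := fun i => M i ⟨0, by omega⟩ with hv
  set Mt : Matrix (Fin n) (Fin (k - 1)) ℂ :=
    Matrix.of (fun (i : Fin n) (j : Fin (k - 1)) =>
      if h : (i : ℕ) + 1 < n then
        M ⟨(i : ℕ) + 1, h⟩ ⟨(j : ℕ) + 1, by have := j.isLt; omega⟩
      else 0) with hMt
  set B : Matrix (Fin n) (Fin n) ℂ :=
    (downshift n) ^ (k - 1) - Mt * lastColsSel n (k - 1) with hB
  -- entries of B
  have hBapp : ∀ (r q : Fin n),
      B r q = (if (r : ℕ) = (q : ℕ) + (k - 1) then 1 else 0)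
        - (if h : n - (k - 1) ≤ (q : ℕ) ∧ (q : ℕ) - (n - (k - 1)) < k - 1 then
            Mt r ⟨(q : ℕ) - (n - (k - 1)), h.2⟩ else 0) := by
    intro r q
    rw [hB, Matrix.sub_apply, downshift_pow, mul_apply]
    congr 1
    have : ∀ j : Fin (k - 1), Mt r j * lastColsSel n (k - 1) j q
        = if (q : ℕ) = n - (k - 1) + (j : ℕ) then Mt r j else 0 := by
      intro j
      simp only [lastColsSel]
      split <;> ring
    rw [Finset.sum_congr rfl (fun j _ => this j), fin_sum_ite']
  ext p q
  rw [Matrix.sub_apply, downshift_pow, mul_apply, mul_apply]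
  have hstep : ∀ r : Fin n,
      (downshift n - vecMulVec v (Pi.single (⟨n - 1, by omega⟩ : Fin n) 1)) p r * B r q
        = ((if (p : ℕ) = (r : ℕ) + 1 then B r q else 0)
            - (if (r : ℕ) = n - 1 then v p * B r q else 0)) := by
    intro r
    rw [Matrix.sub_apply, vecMulVec_apply, Pi.single_apply]
    simp only [downshift]
    have h2 : ((r : ℕ) = n - 1) ↔ (r = (⟨n - 1, by omega⟩ : Fin n)) := by
      rw [Fin.ext_iff]
    rw [show (if (r : ℕ) = n - 1 then v p * B r q else 0)
        = (if r = (⟨n - 1, by omega⟩ : Fin n) then v p * B r q else 0) from by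
      rw [if_congr h2 rfl rfl]]
    split <;> split <;> ring
  rw [Finset.sum_congr rfl (fun r _ => hstep r), Finset.sum_sub_distrib,
    fin_sum_ite'', fin_sum_ite]
  rw [dif_pos (by omega : n - 1 < n)]
  -- now split the M * lastColsSel sum
  have hMsum : (∑ j : Fin k, M p j * lastColsSel n k j q)
      = if h : n - k ≤ (q : ℕ) ∧ (q : ℕ) - (n - k) < k then
          M p ⟨(q : ℕ) - (n - k), h.2⟩ else 0 := by
    have : ∀ j : Fin k, M p j * lastColsSel n k j q
        = if (q : ℕ) = n - k + (j : ℕ) then M p j else 0 := by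
      intro j
      simp only [lastColsSel]
      split <;> ring
    rw [Finset.sum_congr rfl (fun j _ => this j), fin_sum_ite']
  rw [hMsum]
  have hq := q.isLt
  have hBn : B ⟨n - 1, by omega⟩ q
      = if (q : ℕ) = n - k then 1 else 0 := by
    rw [hBapp]
    have h0 : (if h : n - (k - 1) ≤ (q : ℕ) ∧ (q : ℕ) - (n - (k - 1)) < k - 1 then
        Mt ⟨n - 1, by omega⟩ ⟨(q : ℕ) - (n - (k - 1)), h.2⟩ else 0) = 0 := by
      split
      · rw [hMt]
        simp only [Matrix.of_apply]
        rw [dif_neg (show ¬(n - 1 + 1 < n) from by omega)]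
      · rfl
    rw [h0, sub_zero]
    simp only [Fin.val_mk]
    split <;> split <;> first | rfl | omega
  rw [hBn]
  by_cases hp : 1 ≤ (p : ℕ)
  · rw [dif_pos (⟨hp, by omega⟩ : 1 ≤ (p : ℕ) ∧ (p : ℕ) - 1 < n), hBapp]
    simp only [Fin.val_mk]
    have hMtval : ∀ (h : n - (k - 1) ≤ (q : ℕ) ∧ (q : ℕ) - (n - (k - 1)) < k - 1),
        Mt ⟨(p : ℕ) - 1, by omega⟩ ⟨(q : ℕ) - (n - (k - 1)), h.2⟩
          = M p ⟨(q : ℕ) - (n - k), by omega⟩ := by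
      intro h
      obtain ⟨ha, hb⟩ := h
      rw [hMt]
      simp only [Matrix.of_apply, Fin.val_mk]
      rw [dif_pos (show (p : ℕ) - 1 + 1 < n from by omega)]
      congr 1 <;> exact Fin.ext (by simp only [Fin.val_mk]; omega)
    rw [if_congr (show ((p : ℕ) - 1 = (q : ℕ) + (k - 1)) ↔ ((p : ℕ) = (q : ℕ) + k) from by
      omega) rfl rfl]
    by_cases hc : n - (k - 1) ≤ (q : ℕ) ∧ (q : ℕ) - (n - (k - 1)) < k - 1
    · rw [dif_pos hc, hMtval hc,
        dif_pos (show n - k ≤ (q : ℕ) ∧ (q : ℕ) - (n - k) < k from by omega),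
        if_neg (show ¬ ((q : ℕ) = n - k) from by omega)]
      ring
    · rw [dif_neg hc]
      by_cases hq2 : (q : ℕ) = n - k
      · rw [if_pos hq2, dif_pos (show n - k ≤ (q : ℕ) ∧ (q : ℕ) - (n - k) < k from by omega)]
        have hval : M p ⟨(q : ℕ) - (n - k), by omega⟩ = v p := by
          rw [hv]
          congr 1
          exact Fin.ext (by simp only [Fin.val_mk]; omega)
        rw [hval]
        ring
      · rw [if_neg hq2,
          dif_neg (show ¬ (n - k ≤ (q : ℕ) ∧ (q : ℕ) - (n - k) < k) from by omega)]
        ring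
  · have hp0 : (p : ℕ) = 0 := by omega
    have hpe : p = (⟨0, by omega⟩ : Fin n) := Fin.ext (by simpa using hp0)
    rw [dif_neg (show ¬ (1 ≤ (p : ℕ) ∧ (p : ℕ) - 1 < n) from by omega),
      if_neg (show ¬ ((p : ℕ) = (q : ℕ) + k) from by omega)]
    by_cases hc : n - k ≤ (q : ℕ) ∧ (q : ℕ) - (n - k) < k
    · rw [dif_pos hc]
      by_cases hq0 : (q : ℕ) - (n - k) = 0
      · rw [if_pos (show (q : ℕ) = n - k from by omega), hv]
        have hval : M p ⟨(q : ℕ) - (n - k), hc.2⟩ = M p ⟨0, by omega⟩ := by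
          congr 1
          exact Fin.ext (by simpa using hq0)
        rw [hval]
        ring
      · rw [if_neg (show ¬ ((q : ℕ) = n - k) from by omega)]
        have hval : M p ⟨(q : ℕ) - (n - k), hc.2⟩ = 0 := by
          rw [hpe]
          exact hM _ (by simp only [Fin.val_mk]; omega)
        rw [hval]
        ring
    · rw [dif_neg hc, if_neg (show ¬ ((q : ℕ) = n - k) from by omega)]
      ring

end
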